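/- In the two-block SBP setting, for all u, v ∈ ℝ^N one has uᵀ H̄ E v = −c Σ_{k∈{w,e}} [ (e_k⁺ (Pu)⁺)ᵀ H_k⁺ (e_k⁺ (Pv)⁺) + (e_k⁻ (Pu)⁻)ᵀ H_k⁻ (e_k⁻ (Pv)⁻) ]. Consequently E is self-adjoint with respect to H̄, i.e. H̄ E = Eᵀ H̄; and if moreover c ≥ 0 and H_k⁺, H_k⁻ are positive semidefinite for k ∈ {w,e}, then (u, E u)_{H̄} ≤ 0 for every u ∈ ℝ^N. -/

import Mathlib

open Matrix

/-- Quadratic form of a block-diagonal matrix splits. -/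
lemma quad_fromBlocks {n m : ℕ} (A : Matrix (Fin n) (Fin n) ℝ)
    (B : Matrix (Fin m) (Fin m) ℝ) (x y : Fin n ⊕ Fin m → ℝ) :
    x ⬝ᵥ (fromBlocks A 0 0 B) *ᵥ y =
      (x ∘ Sum.inl) ⬝ᵥ A *ᵥ (y ∘ Sum.inl) + (x ∘ Sum.inr) ⬝ᵥ B *ᵥ (y ∘ Sum.inr) := by
  conv_lhs => rw [← Sum.elim_comp_inl_inr x, ← Sum.elim_comp_inl_inr y]
  rw [fromBlocks_mulVec, sumElim_dotProduct_sumElim]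
  simp [Matrix.zero_mulVec]

/-- Quadratic form of `eᵀ H e`. -/
lemma quad_triple {m n : ℕ} (e : Matrix (Fin m) (Fin n) ℝ)
    (H : Matrix (Fin m) (Fin m) ℝ) (x y : Fin n → ℝ) :
    x ⬝ᵥ (eᵀ * H * e) *ᵥ y = (e *ᵥ x) ⬝ᵥ H *ᵥ (e *ᵥ y) := by
  rw [Matrix.mul_assoc, ← Matrix.mulVec_mulVec, ← Matrix.mulVec_mulVec,
    Matrix.dotProduct_mulVec, Matrix.vecMul_transpose]

/-- In the two-block SBP setting, the quadratic form of E with respect to H̄ is a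
negative sum of boundary terms; E is self-adjoint with respect to H̄, and if c ≥ 0 and
the west/east boundary quadratures are positive semidefinite, then (u, E u)_H̄ ≤ 0. -/
theorem twoBlock_E_selfAdjoint_negSemidef
    {Np Nm : ℕ} (hNp : 0 < Np) (hNm : 0 < Nm)
    {mwp mep msp mnp mwm mem msm : ℕ}
    (hmwp : 0 < mwp) (hmep : 0 < mep) (hmsp : 0 < msp) (hmnp : 0 < mnp)
    (hmwm : 0 < mwm) (hmem : 0 < mem) (hmsm : 0 < msm)
    (Hp DLp Dxp Dyp Rp : Matrix (Fin Np) (Fin Np) ℝ)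
    (Hm DLm Dxm Dym Rm : Matrix (Fin Nm) (Fin Nm) ℝ)
    (hHp : Hp.PosDef) (hHm : Hm.PosDef) (hRp : Rp.IsSymm) (hRm : Rm.IsSymm)
    (ewp dwp : Matrix (Fin mwp) (Fin Np) ℝ) (Hwp : Matrix (Fin mwp) (Fin mwp) ℝ)
    (eep dep : Matrix (Fin mep) (Fin Np) ℝ) (Hep : Matrix (Fin mep) (Fin mep) ℝ)
    (esp dsp : Matrix (Fin msp) (Fin Np) ℝ) (Hsp : Matrix (Fin msp) (Fin msp) ℝ)
    (enp dnp : Matrix (Fin mnp) (Fin Np) ℝ) (Hnp : Matrix (Fin mnp) (Fin mnp) ℝ)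
    (ewm dwm : Matrix (Fin mwm) (Fin Nm) ℝ) (Hwm : Matrix (Fin mwm) (Fin mwm) ℝ)
    (eem dem : Matrix (Fin mem) (Fin Nm) ℝ) (Hem : Matrix (Fin mem) (Fin mem) ℝ)
    (esm dsm : Matrix (Fin msm) (Fin Nm) ℝ) (Hsm : Matrix (Fin msm) (Fin msm) ℝ)
    -- interface matching: m_n⁻ = m_s⁺ (same row dimension) and H_n⁻ = H_s⁺
    (enm dnm : Matrix (Fin msp) (Fin Nm) ℝ) (Hnm : Matrix (Fin msp) (Fin msp) ℝ)
    (hHwp : Hwp.IsSymm) (hHep : Hep.IsSymm) (hHsp : Hsp.IsSymm) (hHnp : Hnp.IsSymm)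
    (hHwm : Hwm.IsSymm) (hHem : Hem.IsSymm) (hHsm : Hsm.IsSymm) (hHnm : Hnm.IsSymm)
    (hmatch : Hsp = Hnm)
    (hSBPp : ∀ u v : Fin Np → ℝ,
      u ⬝ᵥ (Hp * DLp) *ᵥ v =
        -((Dxp *ᵥ u) ⬝ᵥ Hp *ᵥ (Dxp *ᵥ v)) - ((Dyp *ᵥ u) ⬝ᵥ Hp *ᵥ (Dyp *ᵥ v))
        - u ⬝ᵥ Rp *ᵥ v
        + (ewp *ᵥ u) ⬝ᵥ Hwp *ᵥ (dwp *ᵥ v) + (eep *ᵥ u) ⬝ᵥ Hep *ᵥ (dep *ᵥ v)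
        + (esp *ᵥ u) ⬝ᵥ Hsp *ᵥ (dsp *ᵥ v) + (enp *ᵥ u) ⬝ᵥ Hnp *ᵥ (dnp *ᵥ v))
    (hSBPm : ∀ u v : Fin Nm → ℝ,
      u ⬝ᵥ (Hm * DLm) *ᵥ v =
        -((Dxm *ᵥ u) ⬝ᵥ Hm *ᵥ (Dxm *ᵥ v)) - ((Dym *ᵥ u) ⬝ᵥ Hm *ᵥ (Dym *ᵥ v))
        - u ⬝ᵥ Rm *ᵥ v
        + (ewm *ᵥ u) ⬝ᵥ Hwm *ᵥ (dwm *ᵥ v) + (eem *ᵥ u) ⬝ᵥ Hem *ᵥ (dem *ᵥ v)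
        + (esm *ᵥ u) ⬝ᵥ Hsm *ᵥ (dsm *ᵥ v) + (enm *ᵥ u) ⬝ᵥ Hnm *ᵥ (dnm *ᵥ v))
    (c : ℝ)
    (Hbar : Matrix (Fin Np ⊕ Fin Nm) (Fin Np ⊕ Fin Nm) ℝ)
    (hHbar : Hbar = fromBlocks Hp 0 0 Hm)
    (L : Matrix (Fin mnp ⊕ Fin msp) (Fin Np ⊕ Fin Nm) ℝ)
    (hL : L = fromBlocks enp 0 esp (-enm))
    (hLHL : IsUnit (L * Hbar⁻¹ * Lᵀ))
    (P : Matrix (Fin Np ⊕ Fin Nm) (Fin Np ⊕ Fin Nm) ℝ)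
    (hP : P = 1 - Hbar⁻¹ * Lᵀ * (L * Hbar⁻¹ * Lᵀ)⁻¹ * L)
    (SATBC1 SATBC2 SATIC : Matrix (Fin Np ⊕ Fin Nm) (Fin Np ⊕ Fin Nm) ℝ)
    (hSATBC1 : SATBC1 = -(Hbar⁻¹ *
      (fromBlocks (ewpᵀ * Hwp * dwp) 0 0 (ewmᵀ * Hwm * dwm)
        + fromBlocks (eepᵀ * Hep * dep) 0 0 (eemᵀ * Hem * dem)
        + fromBlocks 0 0 0 (esmᵀ * Hsm * dsm))))
    (hSATIC : SATIC = -(Hbar⁻¹ *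
      fromBlocks (espᵀ * Hsp * dsp) (espᵀ * Hsp * dnm) 0 0))
    (hSATBC2 : SATBC2 = -(Hbar⁻¹ *
      (fromBlocks (ewpᵀ * Hwp * ewp) 0 0 (ewmᵀ * Hwm * ewm)
        + fromBlocks (eepᵀ * Hep * eep) 0 0 (eemᵀ * Hem * eem))))
    (D E : Matrix (Fin Np ⊕ Fin Nm) (Fin Np ⊕ Fin Nm) ℝ)
    (hD : D = (c ^ 2) • (P * (fromBlocks DLp 0 0 DLm + SATBC1 + SATIC) * P))
    (hE : E = c • (P * SATBC2 * P))
    :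
    (∀ u v : Fin Np ⊕ Fin Nm → ℝ,
      u ⬝ᵥ (Hbar * E) *ᵥ v =
        -c *
          ((ewp *ᵥ ((P *ᵥ u) ∘ Sum.inl)) ⬝ᵥ Hwp *ᵥ (ewp *ᵥ ((P *ᵥ v) ∘ Sum.inl))
          + (eep *ᵥ ((P *ᵥ u) ∘ Sum.inl)) ⬝ᵥ Hep *ᵥ (eep *ᵥ ((P *ᵥ v) ∘ Sum.inl))
          + (ewm *ᵥ ((P *ᵥ u) ∘ Sum.inr)) ⬝ᵥ Hwm *ᵥ (ewm *ᵥ ((P *ᵥ v) ∘ Sum.inr))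
          + (eem *ᵥ ((P *ᵥ u) ∘ Sum.inr)) ⬝ᵥ Hem *ᵥ (eem *ᵥ ((P *ᵥ v) ∘ Sum.inr)))) ∧
    Hbar * E = Eᵀ * Hbar ∧
    (0 ≤ c → Hwp.PosSemidef → Hep.PosSemidef → Hwm.PosSemidef → Hem.PosSemidef →
      ∀ u : Fin Np ⊕ Fin Nm → ℝ, u ⬝ᵥ Hbar *ᵥ (E *ᵥ u) ≤ 0) := by
  -- Hbar is invertible
  have hHbardet : IsUnit Hbar.det := by
    rw [hHbar, Matrix.det_fromBlocks_zero₂₁]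
    exact (isUnit_iff_ne_zero.2 (ne_of_gt hHp.det_pos)).mul
      (isUnit_iff_ne_zero.2 (ne_of_gt hHm.det_pos))
  have hHH : Hbar * Hbar⁻¹ = 1 := Matrix.mul_nonsing_inv _ hHbardet
  have hHH' : Hbar⁻¹ * Hbar = 1 := Matrix.nonsing_inv_mul _ hHbardet
  -- Hbar and Hbar⁻¹ are symmetric
  have hHpT : Hpᵀ = Hp := by
    have := hHp.isHermitian
    rwa [Matrix.IsHermitian, conjTranspose_eq_transpose_of_trivial] at this
  have hHmT : Hmᵀ = Hm := by
    have := hHm.isHermitian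
    rwa [Matrix.IsHermitian, conjTranspose_eq_transpose_of_trivial] at this
  have hHbarT : Hbarᵀ = Hbar := by
    rw [hHbar, fromBlocks_transpose, transpose_zero, transpose_zero, hHpT, hHmT]
  have hHinvT : (Hbar⁻¹)ᵀ = Hbar⁻¹ := by
    rw [Matrix.transpose_nonsing_inv, hHbarT]
  -- the inverse interface matrix is symmetric
  set K : Matrix (Fin mnp ⊕ Fin msp) (Fin mnp ⊕ Fin msp) ℝ := (L * Hbar⁻¹ * Lᵀ)⁻¹ with hK
  have hKT : Kᵀ = K := by
    rw [hK, Matrix.transpose_nonsing_inv]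
    congr 1
    rw [Matrix.transpose_mul, Matrix.transpose_mul, Matrix.transpose_transpose,
      hHinvT, Matrix.mul_assoc]
  -- Hbar * P = Pᵀ * Hbar
  have h1 : Hbar * P = Hbar - Lᵀ * K * L := by
    rw [hP, Matrix.mul_sub, Matrix.mul_one]
    congr 1
    simp only [← Matrix.mul_assoc, hHH, Matrix.one_mul, ← hK]
  have h2 : Pᵀ * Hbar = Hbar - Lᵀ * K * L := by
    rw [hP, Matrix.transpose_sub, Matrix.transpose_one, Matrix.sub_mul, Matrix.one_mul]
    congr 1
    simp only [← hK, Matrix.transpose_mul, Matrix.transpose_transpose, hKT, hHinvT,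
      Matrix.mul_assoc, hHH', Matrix.mul_one]
  have hHPsym : Hbar * P = Pᵀ * Hbar := h1.trans h2.symm
  -- the boundary matrix
  set S : Matrix (Fin Np ⊕ Fin Nm) (Fin Np ⊕ Fin Nm) ℝ :=
    fromBlocks (ewpᵀ * Hwp * ewp) 0 0 (ewmᵀ * Hwm * ewm)
      + fromBlocks (eepᵀ * Hep * eep) 0 0 (eemᵀ * Hem * eem) with hS
  have hHS : Hbar * SATBC2 = -S := by
    rw [hSATBC2, Matrix.mul_neg, ← Matrix.mul_assoc, hHH, Matrix.one_mul, hS]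
  have hKey : Hbar * E = -(c • (Pᵀ * S * P)) := by
    rw [hE, Matrix.mul_smul, ← Matrix.mul_assoc, ← Matrix.mul_assoc, hHPsym,
      Matrix.mul_assoc Pᵀ Hbar SATBC2, hHS, Matrix.mul_neg, Matrix.neg_mul, smul_neg,
      Matrix.mul_assoc]
  have hST : Sᵀ = S := by
    rw [hS]
    simp only [Matrix.transpose_add, fromBlocks_transpose, transpose_zero,
      Matrix.transpose_mul, Matrix.transpose_transpose, hHwp.eq, hHep.eq, hHwm.eq, hHem.eq,
      Matrix.mul_assoc]
  -- part 1
  have part1 : ∀ u v : Fin Np ⊕ Fin Nm → ℝ,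
      u ⬝ᵥ (Hbar * E) *ᵥ v =
        -c *
          ((ewp *ᵥ ((P *ᵥ u) ∘ Sum.inl)) ⬝ᵥ Hwp *ᵥ (ewp *ᵥ ((P *ᵥ v) ∘ Sum.inl))
          + (eep *ᵥ ((P *ᵥ u) ∘ Sum.inl)) ⬝ᵥ Hep *ᵥ (eep *ᵥ ((P *ᵥ v) ∘ Sum.inl))
          + (ewm *ᵥ ((P *ᵥ u) ∘ Sum.inr)) ⬝ᵥ Hwm *ᵥ (ewm *ᵥ ((P *ᵥ v) ∘ Sum.inr))
          + (eem *ᵥ ((P *ᵥ u) ∘ Sum.inr)) ⬝ᵥ Hem *ᵥ (eem *ᵥ ((P *ᵥ v) ∘ Sum.inr))) := by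
    intro u v
    rw [hKey, Matrix.neg_mulVec, dotProduct_neg, Matrix.smul_mulVec,
      dotProduct_smul]
    have hmid : u ⬝ᵥ (Pᵀ * S * P) *ᵥ v = (P *ᵥ u) ⬝ᵥ S *ᵥ (P *ᵥ v) := by
      rw [Matrix.mul_assoc, ← Matrix.mulVec_mulVec, ← Matrix.mulVec_mulVec,
        Matrix.dotProduct_mulVec, Matrix.vecMul_transpose]
    rw [hmid, hS, Matrix.add_mulVec, dotProduct_add]
    rw [quad_fromBlocks, quad_fromBlocks, quad_triple, quad_triple, quad_triple, quad_triple]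
    simp only [smul_eq_mul]
    ring
  refine ⟨part1, ?_, ?_⟩
  · -- self-adjointness
    have : (Hbar * E)ᵀ = Hbar * E := by
      rw [hKey]
      simp only [Matrix.transpose_neg, Matrix.transpose_smul, Matrix.transpose_mul,
        Matrix.transpose_transpose, hST]
      rw [Matrix.mul_assoc]
    calc Hbar * E = (Hbar * E)ᵀ := this.symm
      _ = Eᵀ * Hbarᵀ := by rw [Matrix.transpose_mul]
      _ = Eᵀ * Hbar := by rw [hHbarT]
  · -- negative semidefiniteness
    intro hc hwp hep hwm hem u
    have hrw : u ⬝ᵥ Hbar *ᵥ (E *ᵥ u) = u ⬝ᵥ (Hbar * E) *ᵥ u := by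
      rw [Matrix.mulVec_mulVec]
    rw [hrw, part1 u u]
    have hq : ∀ {m : ℕ} (Hk : Matrix (Fin m) (Fin m) ℝ), Hk.PosSemidef →
        ∀ x : Fin m → ℝ, 0 ≤ x ⬝ᵥ Hk *ᵥ x := by
      intro m Hk hk x
      simpa using hk.dotProduct_mulVec_nonneg x
    have h0 : 0 ≤
        (ewp *ᵥ ((P *ᵥ u) ∘ Sum.inl)) ⬝ᵥ Hwp *ᵥ (ewp *ᵥ ((P *ᵥ u) ∘ Sum.inl))
        + (eep *ᵥ ((P *ᵥ u) ∘ Sum.inl)) ⬝ᵥ Hep *ᵥ (eep *ᵥ ((P *ᵥ u) ∘ Sum.inl))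
        + (ewm *ᵥ ((P *ᵥ u) ∘ Sum.inr)) ⬝ᵥ Hwm *ᵥ (ewm *ᵥ ((P *ᵥ u) ∘ Sum.inr))
        + (eem *ᵥ ((P *ᵥ u) ∘ Sum.inr)) ⬝ᵥ Hem *ᵥ (eem *ᵥ ((P *ᵥ u) ∘ Sum.inr)) := by
      have := hq Hwp hwp (ewp *ᵥ ((P *ᵥ u) ∘ Sum.inl))
      have := hq Hep hep (eep *ᵥ ((P *ᵥ u) ∘ Sum.inl))
      have := hq Hwm hwm (ewm *ᵥ ((P *ᵥ u) ∘ Sum.inr))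
      have := hq Hem hem (eem *ᵥ ((P *ᵥ u) ∘ Sum.inr))
      linarith
    have : -c ≤ 0 := by linarith
    exact mul_nonpos_of_nonpos_of_nonneg this h0
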